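/- Define φ : [0,∞) → [0,∞) by φ(x) = x − x^{4/3} for x ∈ [0, 27/64] and φ(x) = 27/256 for x > 27/64. Then φ is increasing and for every γ ∈ (0,2) the series Σ_{n≥1} n^γ · φ^[n](r) converges for every r ≥ 0. -/

import Mathlib

open Real

private lemma cube_rpow43 (a : ℝ) (ha : 0 ≤ a) : (a ^ 3) ^ ((4:ℝ)/3) = a ^ 4 := by
  rw [← Real.rpow_natCast a 3, ← Real.rpow_mul ha, ← Real.rpow_natCast a 4]
  norm_num

private lemma cube_rpow13 (a : ℝ) (ha : 0 ≤ a) : (a ^ 3) ^ ((1:ℝ)/3) = a := by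
  rw [← Real.rpow_natCast a 3, ← Real.rpow_mul ha]
  norm_num

private lemma g_mono : MonotoneOn (fun t : ℝ => t - t ^ ((4:ℝ)/3)) (Set.Icc 0 (27/64)) := by
  have hderiv : ∀ t : ℝ, HasDerivAt (fun t : ℝ => t - t ^ ((4:ℝ)/3))
      (1 - (4:ℝ)/3 * t ^ ((1:ℝ)/3)) t := by
    intro t
    have h1 := Real.hasDerivAt_rpow_const (x := t) (p := (4:ℝ)/3) (Or.inr (by norm_num))
    have h2 := (hasDerivAt_id t).sub h1
    exact h2.congr_deriv (by norm_num)
  apply monotoneOn_of_deriv_nonneg (convex_Icc _ _)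
  · exact Continuous.continuousOn (by
      have : Continuous fun t : ℝ => t ^ ((4:ℝ)/3) := by
        apply continuous_iff_continuousAt.mpr
        intro x
        exact Real.continuousAt_rpow_const x _ (Or.inr (by norm_num))
      exact continuous_id.sub this)
  · intro t ht
    exact (hderiv t).differentiableAt.differentiableWithinAt
  · intro t ht
    rw [interior_Icc] at ht
    rw [(hderiv t).deriv]
    have h13 : t ^ ((1:ℝ)/3) ≤ (3:ℝ)/4 := by
      have : t ^ ((1:ℝ)/3) ≤ ((27:ℝ)/64) ^ ((1:ℝ)/3) :=
        Real.rpow_le_rpow ht.1.le ht.2.le (by norm_num)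
      have h2 : ((27:ℝ)/64) = ((3:ℝ)/4) ^ 3 := by norm_num
      rw [h2, cube_rpow13 _ (by norm_num)] at this
      exact this
    nlinarith

private lemma g_nonneg {a : ℝ} (ha : 0 ≤ a) (ha1 : a ≤ 1) : 0 ≤ a - a ^ ((4:ℝ)/3) := by
  rcases eq_or_lt_of_le ha with h | h
  · simp [← h, Real.zero_rpow (by norm_num : ((4:ℝ)/3) ≠ 0)]
  · have : a ^ ((4:ℝ)/3) ≤ a ^ (1:ℝ) :=
      Real.rpow_le_rpow_of_exponent_ge h ha1 (by norm_num)
    rw [Real.rpow_one] at this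
    linarith

private lemma g_val : (27:ℝ)/64 - ((27:ℝ)/64) ^ ((4:ℝ)/3) = 27/256 := by
  have h : ((27:ℝ)/64) = ((3:ℝ)/4) ^ 3 := by norm_num
  rw [h, cube_rpow43 _ (by norm_num)]
  norm_num

private lemma key_step (m : ℝ) (hm : 1 ≤ m) :
    27 / m ^ 3 - (27 / m ^ 3) ^ ((4:ℝ)/3) ≤ 27 / (m + 1) ^ 3 := by
  have hm0 : (0:ℝ) < m := by linarith
  have h : (27 / m ^ 3 : ℝ) = (3 / m) ^ 3 := by
    field_simp
    norm_num
  rw [h, cube_rpow43 _ (by positivity)]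
  rw [div_pow, div_pow, div_sub_div _ _ (by positivity) (by positivity),
    div_le_div_iff₀ (by positivity) (by positivity)]
  ring_nf
  nlinarith [sq_nonneg m, pow_pos hm0 3, pow_pos hm0 4, sq_nonneg (m-1)]

theorem example_phi_in_Gamma_gamma :
    ∀ φ : ℝ → ℝ,
      (φ = fun x => if x ≤ 27 / 64 then x - x ^ ((4 : ℝ) / 3) else 27 / 256) →
      (∀ x y : ℝ, 0 ≤ x → x ≤ y → φ x ≤ φ y) ∧
      (∀ γ : ℝ, γ ∈ Set.Ioo (0 : ℝ) 2 → ∀ r : ℝ, 0 ≤ r →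
        Summable (fun n : ℕ => (n : ℝ) ^ γ * φ^[n] r)) := by
  intro φ hφ
  have hmono : ∀ x y : ℝ, 0 ≤ x → x ≤ y → φ x ≤ φ y := by
    intro x y hx hxy
    subst hφ
    by_cases hy : y ≤ 27/64
    · simp only [if_pos (hxy.trans hy), if_pos hy]
      exact g_mono ⟨hx, hxy.trans hy⟩ ⟨hx.trans hxy, hy⟩ hxy
    · by_cases hx' : x ≤ 27/64
      · simp only [if_pos hx', if_neg hy]
        calc x - x ^ ((4:ℝ)/3) ≤ 27/64 - ((27:ℝ)/64) ^ ((4:ℝ)/3) :=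
              g_mono ⟨hx, hx'⟩ ⟨by norm_num, le_refl _⟩ hx'
          _ = 27/256 := g_val
      · simp only [if_neg hx', if_neg hy]
        exact le_refl _
  refine ⟨hmono, ?_⟩
  intro γ hγ r hr
  -- φ maps nonneg reals into [0, 27/256]
  have hφ_bound : ∀ a : ℝ, 0 ≤ a → 0 ≤ φ a ∧ φ a ≤ 27/256 := by
    intro a ha
    subst hφ
    by_cases h : a ≤ 27/64
    · simp only [if_pos h]
      constructor
      · exact g_nonneg ha (h.trans (by norm_num))
      · calc a - a ^ ((4:ℝ)/3) ≤ 27/64 - ((27:ℝ)/64) ^ ((4:ℝ)/3) :=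
            g_mono ⟨ha, h⟩ ⟨by norm_num, le_refl _⟩ h
          _ = 27/256 := g_val
    · simp only [if_neg h]; norm_num
  -- main induction
  have hiter : ∀ n : ℕ, 0 ≤ φ^[n+1] r ∧ φ^[n+1] r ≤ 27 / ((n:ℝ) + 4) ^ 3 := by
    intro n
    induction n with
    | zero =>
      obtain ⟨h0, h1⟩ := hφ_bound r hr
      refine ⟨by simpa using h0, ?_⟩
      have he : φ^[0+1] r = φ r := by simp
      rw [he]
      norm_num
      linarith
    | succ n ih =>
      obtain ⟨h0, h1⟩ := ih
      set a := φ^[n+1] r with ha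
      have hb : 27 / ((n:ℝ) + 4) ^ 3 ≤ 27/64 := by
        have h4 : (4:ℝ)^3 ≤ ((n:ℝ)+4)^3 :=
          pow_le_pow_left₀ (by norm_num) (by linarith [Nat.cast_nonneg (α := ℝ) n]) 3
        rw [div_le_div_iff₀ (by positivity) (by norm_num)]
        nlinarith
      have ha64 : a ≤ 27/64 := h1.trans hb
      have hstep : φ a ≤ 27 / ((n:ℝ) + 1 + 4) ^ 3 := by
        have hφa : φ a = a - a ^ ((4:ℝ)/3) := by rw [hφ]; simp [ha64]
        rw [hφa]
        calc a - a ^ ((4:ℝ)/3)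
            ≤ 27 / ((n:ℝ)+4)^3 - (27 / ((n:ℝ)+4)^3) ^ ((4:ℝ)/3) :=
              g_mono ⟨h0, ha64⟩ ⟨by positivity, hb⟩ h1
          _ ≤ 27 / (((n:ℝ)+4) + 1) ^ 3 := key_step _ (by nlinarith [Nat.cast_nonneg (α := ℝ) n])
          _ = 27 / ((n:ℝ) + 1 + 4) ^ 3 := by ring_nf
      have hpos : 0 ≤ φ a := (hφ_bound a h0).1
      rw [Function.iterate_succ_apply']
      push_cast
      exact ⟨hpos, hstep⟩
  -- summability by comparison
  have hsum : Summable (fun n : ℕ => 27 * (n:ℝ) ^ (γ - 3)) := by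
    apply Summable.mul_left
    exact (Real.summable_nat_rpow).mpr (by linarith [hγ.2])
  apply Summable.of_nonneg_of_le _ _ hsum
  · intro n
    cases n with
    | zero =>
      simp [Real.zero_rpow (ne_of_gt hγ.1)]
    | succ m =>
      exact mul_nonneg (Real.rpow_nonneg (Nat.cast_nonneg _) _) (hiter m).1
  · intro n
    cases n with
    | zero =>
      simp [Real.zero_rpow (ne_of_gt hγ.1), Real.zero_rpow (by linarith [hγ.2] : γ - 3 ≠ 0)]
    | succ m =>
      obtain ⟨h0, h1⟩ := hiter m
      have hnpos : (0:ℝ) < ((m+1:ℕ):ℝ) := by push_cast; linarith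
      have hle : φ^[m+1] r ≤ 27 / ((m+1:ℕ):ℝ) ^ 3 := by
        refine h1.trans ?_
        apply div_le_div_of_nonneg_left (by norm_num) (by positivity)
        push_cast
        nlinarith [Nat.cast_nonneg (α := ℝ) m]
      calc ((m+1:ℕ):ℝ) ^ γ * φ^[m+1] r
          ≤ ((m+1:ℕ):ℝ) ^ γ * (27 / ((m+1:ℕ):ℝ) ^ 3) := by
            apply mul_le_mul_of_nonneg_left hle (Real.rpow_nonneg hnpos.le γ)
        _ = 27 * ((m+1:ℕ):ℝ) ^ (γ - 3) := by
            rw [← Real.rpow_natCast ((m+1:ℕ):ℝ) 3, Real.rpow_sub hnpos]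
            push_cast
            ring
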